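/- Optimal value rescaling: for every history h ∈ H with τ = g(h), the optimal values satisfy V̲*(τ) = λ^(d-1) V*(h). -/

import Mathlib

/-- Finite interaction histories: an initial observation-reward pair followed by a
list of (decision, observation, reward) triples. -/
abbrev Hist (O R A : Type) : Type := (O × R) × List (A × O × R)

namespace Seq

variable {O R A B : Type} {m : ℕ}

/-- The most recent observation of a history. -/
def lastObs (h : Hist O R A) : O :=
  match h.2.getLast? with
  | some s => s.2.1
  | none => h.1.1

/-- Extending a history by one interaction step. -/
def ext (h : Hist O R A) (a : A) (o : O) (r : R) : Hist O R A :=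
  (h.1, h.2 ++ [(a, o, r)])

/-- Appending a block of steps to a history. -/
def app (τ : Hist O R B) (l : List (B × O × R)) : Hist O R B := (τ.1, τ.2 ++ l)

/-- `inter x o r⊥ i` is the interleaved block `⟨x o r⊥⟩_{<i}`: the first `i`
decision symbols of the code `x ∈ B^(m+1)`, each followed by the dummy
observation `o` and dummy reward `r⊥`. -/
def inter (x : Fin (m + 1) → B) (o : O) (rbot : R) (i : ℕ) : List (B × O × R) :=
  ((List.ofFn x).take i).map fun b => (b, o, rbot)

/-- The body of the history transformation `g`, keeping track of the current last
observation. Each original step `(a, o', r')` taken at last observation `o` is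
replaced by `C(a)₁ o r⊥ … C(a)_{d-1} o r⊥ C(a)_d o' r'` with `d = m + 1`. -/
def gList (C : A → Fin (m + 1) → B) (rbot : R) : O → List (A × O × R) → List (B × O × R)
  | _, [] => []
  | o, (a, o', r') :: t =>
      (inter (C a) o rbot m ++ [(C a (Fin.last m), o', r')]) ++ gList C rbot o' t

/-- The history transformation function `g : H → H̲` sequentializing each action
into its `B`-ary code. -/
def g (C : A → Fin (m + 1) → B) (rbot : R) (h : Hist O R A) : Hist O R B :=
  (h.1, gList C rbot h.1.1 h.2)

end Seq


section RealSup

variable {ι : Type*} [Finite ι] [Nonempty ι]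

lemma bddR (f : ι → ℝ) : BddAbove (Set.range f) := (Set.finite_range f).bddAbove

lemma abs_ciSup_le (f : ι → ℝ) (M : ℝ) (hf : ∀ i, |f i| ≤ M) : |⨆ i, f i| ≤ M := by
  rcases ‹Nonempty ι› with ⟨i0⟩
  refine abs_le.2 ⟨?_, ciSup_le fun i => (abs_le.1 (hf i)).2⟩
  exact le_ciSup_of_le (bddR f) i0 (abs_le.1 (hf i0)).1

lemma abs_ciSup_sub_ciSup (f g : ι → ℝ) (c : ℝ) (h : ∀ i, |f i - g i| ≤ c) :
    |(⨆ i, f i) - ⨆ i, g i| ≤ c := by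
  refine abs_le.2 ⟨?_, ?_⟩
  · rw [neg_le, neg_sub, sub_le_iff_le_add]
    exact ciSup_le fun i => by
      have h1 := (abs_le.1 (h i)).1
      have h2 := le_ciSup (bddR f) i
      linarith
  · rw [sub_le_iff_le_add]
    exact ciSup_le fun i => by
      have h1 := (abs_le.1 (h i)).2
      have h2 := le_ciSup (bddR g) i
      linarith

end RealSup

namespace Seq

variable {O R A B : Type} {m : ℕ}

/-- last observation of a list, with default. -/
def lobs (o : O) (l : List (A × O × R)) : O := (l.getLast?.map (fun s => s.2.1)).getD o

lemma lastObs_def (h : Hist O R A) : lastObs h = lobs h.1.1 h.2 := by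
  unfold lastObs lobs; cases h.2.getLast? <;> rfl

lemma lobs_nil (o : O) : lobs o ([] : List (A × O × R)) = o := rfl

lemma lobs_append (o : O) (l₁ l₂ : List (A × O × R)) :
    lobs o (l₁ ++ l₂) = lobs (lobs o l₁) l₂ := by
  unfold lobs; rw [List.getLast?_append]; cases h2 : l₂.getLast? <;> simp

lemma lobs_concat (o : O) (l : List (A × O × R)) (s : A × O × R) :
    lobs o (l ++ [s]) = s.2.1 := by
  unfold lobs; rw [List.getLast?_concat]; rfl

lemma lobs_cons (o : O) (s : A × O × R) (t : List (A × O × R)) :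
    lobs o (s :: t) = lobs s.2.1 t := by
  have := lobs_append o [s] t
  rw [show lobs o [s] = s.2.1 from lobs_concat o [] s] at this
  simpa [lobs_concat o [] s] using this

lemma app_nil (τ : Hist O R B) : app τ [] = τ := by simp [app]

lemma ext_app (τ : Hist O R B) (l : List (B × O × R)) (b : B) (o : O) (r : R) :
    ext (app τ l) b o r = app τ (l ++ [(b, o, r)]) := by
  simp [ext, app]

lemma inter_zero (x : Fin (m + 1) → B) (o : O) (rbot : R) :
    inter x o rbot 0 = ([] : List (B × O × R)) := rfl

lemma inter_succ (x : Fin (m + 1) → B) (o : O) (rbot : R) {i : ℕ} (hi : i < m + 1) :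
    inter x o rbot (i + 1) = inter x o rbot i ++ [(x ⟨i, hi⟩, o, rbot)] := by
  have h1 : (List.ofFn x)[i]? = some (x ⟨i, hi⟩) := by
    rw [List.getElem?_eq_getElem (by simpa using hi), List.getElem_ofFn]
  simp only [inter, List.take_succ, h1, Option.toList_some, List.map_append, List.map_cons,
    List.map_nil]

lemma length_inter (x : Fin (m + 1) → B) (o : O) (rbot : R) (i : ℕ) :
    (inter x o rbot i).length = min i (m + 1) := by
  simp [inter]

lemma inter_congr (x y : Fin (m + 1) → B) (o : O) (rbot : R) :
    ∀ i, i ≤ m + 1 → (∀ j : Fin (m + 1), (j : ℕ) < i → x j = y j) →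
      inter x o rbot i = inter y o rbot i := by
  intro i
  induction i with
  | zero => intro _ _; rfl
  | succ i ih =>
    intro hi hagree
    have hi' : i < m + 1 := hi
    rw [inter_succ x o rbot hi', inter_succ y o rbot hi',
      ih (le_of_lt hi') (fun j hj => hagree j (Nat.lt_succ_of_lt hj)),
      hagree ⟨i, hi'⟩ (Nat.lt_succ_self i)]

lemma lobs_inter (o' o : O) (rbot : R) (x : Fin (m + 1) → B) {i : ℕ} (hi : i ≤ m + 1) :
    lobs o' (inter x o rbot i) = if i = 0 then o' else o := by
  cases i with
  | zero => simp [inter_zero, lobs_nil]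
  | succ i =>
    have hi' : i < m + 1 := hi
    rw [inter_succ x o rbot hi', lobs_concat]
    simp

lemma gList_concat (C : A → Fin (m + 1) → B) (rbot : R) :
    ∀ (l : List (A × O × R)) (o : O) (a : A) (o' : O) (r' : R),
      gList C rbot o (l ++ [(a, o', r')])
        = gList C rbot o l
            ++ (inter (C a) (lobs o l) rbot m ++ [(C a (Fin.last m), o', r')]) := by
  intro l
  induction l with
  | nil => intro o a o' r'; simp [gList, lobs_nil]
  | cons s t ih =>
    intro o a o' r'
    obtain ⟨b, o2, r2⟩ := s
    simp only [List.cons_append, gList, lobs_cons, List.append_eq]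
    rw [ih o2 a o' r']
    simp [List.append_assoc]

lemma lobs_gList (C : A → Fin (m + 1) → B) (rbot : R) :
    ∀ (l : List (A × O × R)) (o : O), lobs o (gList C rbot o l) = lobs o l := by
  intro l
  induction l with
  | nil => intro o; simp [gList, lobs_nil]
  | cons s t ih =>
    intro o
    obtain ⟨a, o2, r2⟩ := s
    show lobs o ((inter (C a) o rbot m ++ [(C a (Fin.last m), o2, r2)]) ++ gList C rbot o2 t)
      = lobs o ((a, o2, r2) :: t)
    rw [lobs_append, lobs_concat, ih o2, lobs_cons]

lemma length_gList (C : A → Fin (m + 1) → B) (rbot : R) :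
    ∀ (l : List (A × O × R)) (o : O), (gList C rbot o l).length = (m + 1) * l.length := by
  intro l
  induction l with
  | nil => intro o; simp [gList]
  | cons s t ih =>
    intro o
    obtain ⟨a, o2, r2⟩ := s
    show ((inter (C a) o rbot m ++ [(C a (Fin.last m), o2, r2)]) ++ gList C rbot o2 t).length
      = (m + 1) * ((a, o2, r2) :: t).length
    simp [length_inter, ih o2, Nat.mul_succ, Nat.mul_add]
    ring

lemma lastObs_app_inter (C : A → Fin (m + 1) → B) (rbot : R) (h : Hist O R A)
    (x : Fin (m + 1) → B) {i : ℕ} (hi : i ≤ m + 1) :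
    lastObs (app (g C rbot h) (inter x (lastObs h) rbot i)) = lastObs h := by
  have h1 : lastObs (app (g C rbot h) (inter x (lastObs h) rbot i))
      = lobs h.1.1 (gList C rbot h.1.1 h.2 ++ inter x (lastObs h) rbot i) := lastObs_def _
  rw [h1, lobs_append, lobs_gList, ← lastObs_def, lobs_inter _ _ _ _ hi]
  split <;> rfl

lemma length_app_inter (C : A → Fin (m + 1) → B) (rbot : R) (h : Hist O R A)
    (x : Fin (m + 1) → B) (o : O) {i : ℕ} (hi : i ≤ m + 1) :
    (app (g C rbot h) (inter x o rbot i)).2.length = (m + 1) * h.2.length + i := by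
  simp [app, g, length_gList, length_inter, Nat.min_eq_left hi]

lemma g_ext (C : A → Fin (m + 1) → B) (rbot : R) (h : Hist O R A) (a : A) (o' : O) (r' : R) :
    g C rbot (ext h a o' r')
      = ext (app (g C rbot h) (inter (C a) (lastObs h) rbot m)) (C a (Fin.last m)) o' r' := by
  simp only [g, ext, app, gList_concat, lastObs_def]
  simp [List.append_assoc]

/-- merge of two codes: first `i` coordinates from `x`, rest from `z`. -/
def mergeFn {n : ℕ} (i : ℕ) (x z : Fin n → B) : Fin n → B :=
  fun j => if (j : ℕ) < i then x j else z j

lemma mergeFn_zero {n : ℕ} (x z : Fin n → B) : mergeFn 0 x z = z := by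
  funext j; simp [mergeFn]

lemma mergeFn_update {n : ℕ} {i : ℕ} (hi : i < n) (x z : Fin n → B) (b : B) :
    mergeFn (i + 1) (Function.update x ⟨i, hi⟩ b) z
      = mergeFn i x (Function.update z ⟨i, hi⟩ b) := by
  funext j
  rcases lt_trichotomy (j : ℕ) i with hj | hj | hj
  · have hjp : j ≠ ⟨i, hi⟩ := by
      intro hh; rw [hh] at hj; exact absurd hj (lt_irrefl i)
    simp [mergeFn, hj, Nat.lt_succ_of_lt hj, Function.update_of_ne hjp]
  · have hjp : j = ⟨i, hi⟩ := Fin.ext hj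
    subst hjp
    simp [mergeFn, Nat.lt_succ_self, Function.update_self]
  · have h1 : ¬ (j : ℕ) < i + 1 := by omega
    have h2 : ¬ (j : ℕ) < i := by omega
    have hjp : j ≠ ⟨i, hi⟩ := by
      intro hh; rw [hh] at hj; exact absurd hj (lt_irrefl i)
    simp [mergeFn, h1, h2, Function.update_of_ne hjp]

lemma mergeFn_self {n : ℕ} {i : ℕ} (hi : i < n) (x z : Fin n → B) :
    mergeFn i x z = mergeFn (i + 1) (Function.update x ⟨i, hi⟩ (z ⟨i, hi⟩)) z := by
  rw [mergeFn_update hi]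
  congr 1
  funext j
  by_cases hj : j = ⟨i, hi⟩
  · subst hj; simp
  · simp [Function.update_of_ne hj]

end Seq

/-- Optimal value rescaling. Let `Q*` (resp. `Q̲*`) be the bounded
optimal action-value function of the original environment `P` with discount `γ`
(resp. of the sequentialized environment `P̲` with discount `λ`, `λ^d = γ`,
`ρ r⊥ = 0`), so that `V*(h) = max_a Q*(h,a)` and `V̲*(τ) = max_x Q̲*(τ,x)`. Then
for every history `h` with `τ = g(h)`: `V̲*(τ) = λ^(d-1) V*(h)`. -/
theorem optimal_value_rescaling {O R A B : Type} [Fintype O] [Fintype R]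
    [Fintype A] [Fintype B] [DecidableEq O] [DecidableEq R] [Nonempty A] [Nonempty B]
    {m : ℕ}
    (ρ : R → ℝ) (rbot : R) (hρ : ρ rbot = 0)
    (γ lam : ℝ) (hγ0 : 0 ≤ γ) (hγ1 : γ < 1) (hlam0 : 0 ≤ lam)
    (hlamd : lam ^ (m + 1) = γ)
    (C : A → Fin (m + 1) → B) (D : (Fin (m + 1) → B) → A)
    (hDC : ∀ a, D (C a) = a) (hCD : ∀ x, C (D x) = x)
    (P : Hist O R A → A → (O × R) → ℝ)
    (hP0 : ∀ h a y, 0 ≤ P h a y) (hP1 : ∀ h a, ∑ y : O × R, P h a y = 1)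
    (Q : Hist O R A → A → ℝ) (hQbdd : ∃ M, ∀ h a, |Q h a| ≤ M)
    (hQOBE : ∀ h a, Q h a = ∑ o' : O, ∑ r' : R,
        P h a (o', r') * (ρ r' + γ * ⨆ a', Q (Seq.ext h a o' r') a'))
    (Pb : Hist O R B → B → (O × R) → ℝ)
    (hPb0 : ∀ τ x y, 0 ≤ Pb τ x y) (hPb1 : ∀ τ x, ∑ y : O × R, Pb τ x y = 1)
    (hPbpartial : ∀ τ : Hist O R B, (τ.2.length + 1) % (m + 1) ≠ 0 → ∀ x o' r',
        Pb τ x (o', r') = if o' = Seq.lastObs τ ∧ r' = rbot then 1 else 0)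
    (hPbcomplete : ∀ (h : Hist O R A) (a : A) (o' : O) (r' : R),
        Pb (Seq.app (Seq.g C rbot h) (Seq.inter (C a) (Seq.lastObs h) rbot m))
            (C a (Fin.last m)) (o', r')
          = P h a (o', r'))
    (Qb : Hist O R B → B → ℝ) (hQbbdd : ∃ M, ∀ τ x, |Qb τ x| ≤ M)
    (hQbOBE : ∀ τ x, Qb τ x = ∑ o' : O, ∑ r' : R,
        Pb τ x (o', r') * (ρ r' + lam * ⨆ x', Qb (Seq.ext τ x o' r') x')) :
    ∀ h : Hist O R A, (⨆ x, Qb (Seq.g C rbot h) x) = lam ^ m * ⨆ a, Q h a := by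

  intro h0
  have hO : Nonempty O := ⟨h0.1.1⟩
  have hR : Nonempty R := ⟨h0.1.2⟩
  obtain ⟨M2, hM2⟩ := hQbdd
  obtain ⟨M1, hM1⟩ := hQbbdd
  have hlm : (0:ℝ) ≤ lam ^ m := pow_nonneg hlam0 m
  set diff : Hist O R A → ℝ :=
    fun h => (⨆ x, Qb (Seq.g C rbot h) x) - lam ^ m * ⨆ a, Q h a with hdiffdef
  have hbd : ∀ h : Hist O R A, |diff h| ≤ M1 + lam ^ m * M2 := by
    intro h
    have h1 : |⨆ x, Qb (Seq.g C rbot h) x| ≤ M1 := abs_ciSup_le _ _ (fun x => hM1 _ x)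
    have h2 : |⨆ a, Q h a| ≤ M2 := abs_ciSup_le _ _ (fun a => hM2 _ a)
    calc |diff h| ≤ |⨆ x, Qb (Seq.g C rbot h) x| + |lam ^ m * ⨆ a, Q h a| := by
          simp only [hdiffdef]
          exact abs_sub _ _
      _ ≤ M1 + lam ^ m * M2 := by
          rw [abs_mul, abs_of_nonneg hlm]
          exact add_le_add h1 (mul_le_mul_of_nonneg_left h2 hlm)
  set Δ : ℝ := sSup (Set.range fun h => |diff h|) with hDdef
  have hbddD : BddAbove (Set.range fun h : Hist O R A => |diff h|) :=
    ⟨M1 + lam ^ m * M2, by rintro _ ⟨h, rfl⟩; exact hbd h⟩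
  have hD : ∀ h, |diff h| ≤ Δ := fun h => le_csSup hbddD ⟨h, rfl⟩
  have hD0 : 0 ≤ Δ := le_trans (abs_nonneg _) (hD h0)
  -- the one-step identity inside a block
  have mid : ∀ τ : Hist O R B, (τ.2.length + 1) % (m + 1) ≠ 0 → ∀ b : B,
      Qb τ b = lam * ⨆ b', Qb (Seq.ext τ b (Seq.lastObs τ) rbot) b' := by
    intro τ hτ b
    rw [hQbOBE τ b]
    rw [Finset.sum_eq_single (Seq.lastObs τ)]
    · rw [Finset.sum_eq_single rbot]
      · rw [hPbpartial τ hτ b (Seq.lastObs τ) rbot]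
        simp [hρ]
      · intro r' _ hr
        rw [hPbpartial τ hτ b (Seq.lastObs τ) r']
        simp [hr]
      · intro hmem; exact absurd (Finset.mem_univ _) hmem
    · intro o' _ ho
      apply Finset.sum_eq_zero
      intro r' _
      rw [hPbpartial τ hτ b o' r']
      simp [ho]
    · intro hmem; exact absurd (Finset.mem_univ _) hmem
  -- contraction step
  have key : ∀ h : Hist O R A, |diff h| ≤ γ * Δ := by
    intro h
    set F : (Fin (m + 1) → B) → ℝ := fun y =>
      Qb (Seq.app (Seq.g C rbot h) (Seq.inter y (Seq.lastObs h) rbot m)) (y (Fin.last m))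
      with hFdef
    have claim : ∀ k, k ≤ m → ∀ x : Fin (m + 1) → B,
        (⨆ b, Qb (Seq.app (Seq.g C rbot h) (Seq.inter x (Seq.lastObs h) rbot (m - k))) b)
          = lam ^ k * ⨆ z, F (Seq.mergeFn (m - k) x z) := by
      intro k
      induction k with
      | zero =>
        intro _ x
        simp only [Nat.sub_zero, pow_zero, one_mul]
        have h1 : ∀ z : Fin (m + 1) → B, F (Seq.mergeFn m x z)
            = Qb (Seq.app (Seq.g C rbot h) (Seq.inter x (Seq.lastObs h) rbot m))
                (z (Fin.last m)) := by
          intro z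
          have e1 : Seq.inter (Seq.mergeFn m x z) (Seq.lastObs h) rbot m
              = Seq.inter x (Seq.lastObs h) rbot m := by
            apply Seq.inter_congr _ _ _ _ m (Nat.le_succ m)
            intro j hj
            simp [Seq.mergeFn, hj]
          have e2 : Seq.mergeFn m x z (Fin.last m) = z (Fin.last m) := by
            simp [Seq.mergeFn]
          simp only [hFdef]
          rw [e1, e2]
        apply le_antisymm
        · exact ciSup_le fun b =>
            le_ciSup_of_le (bddR _) (fun _ => b) (le_of_eq (h1 (fun _ => b)).symm)
        · refine ciSup_le fun z => ?_
          rw [h1 z]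
          exact le_ciSup (bddR _) _
      | succ k ih =>
        intro hk x
        have hk' : k ≤ m := Nat.le_of_succ_le hk
        have him : m - (k + 1) < m + 1 := by omega
        have hieq : m - (k + 1) + 1 = m - k := by omega
        set i := m - (k + 1) with hidef
        have hlen : ((Seq.app (Seq.g C rbot h)
            (Seq.inter x (Seq.lastObs h) rbot i)).2.length + 1) % (m + 1) ≠ 0 := by
          rw [Seq.length_app_inter C rbot h x (Seq.lastObs h) (le_of_lt him)]
          have e : ((m + 1) * h.2.length + i + 1) % (m + 1) = i + 1 := by
            rw [Nat.add_assoc, Nat.mul_add_mod]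
            exact Nat.mod_eq_of_lt (by omega)
          rw [e]; omega
        have hlast := Seq.lastObs_app_inter C rbot h x (i := i) (le_of_lt him)
        have step : ∀ b : B, Qb (Seq.app (Seq.g C rbot h)
              (Seq.inter x (Seq.lastObs h) rbot i)) b
            = lam * ⨆ b', Qb (Seq.app (Seq.g C rbot h)
                (Seq.inter (Function.update x ⟨i, him⟩ b) (Seq.lastObs h) rbot (i + 1))) b' := by
          intro b
          have hne : ∀ j : Fin (m + 1), (j : ℕ) < i → j ≠ ⟨i, him⟩ := by
            intro j hj hh
            rw [hh] at hj
            exact absurd hj (lt_irrefl i)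
          have e4 : Seq.inter x (Seq.lastObs h) rbot i ++ [(b, Seq.lastObs h, rbot)]
              = Seq.inter (Function.update x ⟨i, him⟩ b) (Seq.lastObs h) rbot (i + 1) := by
            rw [Seq.inter_succ _ _ _ him, Function.update_self,
              Seq.inter_congr x (Function.update x ⟨i, him⟩ b) (Seq.lastObs h) rbot i
                (le_of_lt him) (fun j hj => (Function.update_of_ne (hne j hj) b x).symm)]
          rw [mid _ hlen b, hlast, Seq.ext_app, e4]
        calc (⨆ b, Qb (Seq.app (Seq.g C rbot h) (Seq.inter x (Seq.lastObs h) rbot i)) b)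
            = ⨆ b : B, lam * ⨆ b', Qb (Seq.app (Seq.g C rbot h)
                (Seq.inter (Function.update x ⟨i, him⟩ b) (Seq.lastObs h) rbot (i + 1))) b' :=
              iSup_congr step
          _ = ⨆ b : B, lam * (lam ^ k
                * ⨆ z, F (Seq.mergeFn (i + 1) (Function.update x ⟨i, him⟩ b) z)) := by
              refine iSup_congr fun b => ?_
              rw [hieq, ih hk' (Function.update x ⟨i, him⟩ b)]
          _ = lam ^ (k + 1) * ⨆ b : B,
                ⨆ z, F (Seq.mergeFn (i + 1) (Function.update x ⟨i, him⟩ b) z) := by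
              rw [Real.mul_iSup_of_nonneg (pow_nonneg hlam0 (k + 1))]
              exact iSup_congr fun b => by ring
          _ = lam ^ (k + 1) * ⨆ z, F (Seq.mergeFn i x z) := by
              congr 1
              apply le_antisymm
              · refine ciSup_le fun b => ciSup_le fun z => ?_
                rw [Seq.mergeFn_update him]
                exact le_ciSup (f := fun z' => F (Seq.mergeFn i x z')) (bddR _)
                  (Function.update z ⟨i, him⟩ b)
              · refine ciSup_le fun z => ?_
                rw [Seq.mergeFn_self him x z]
                exact le_ciSup_of_le (bddR _) (z ⟨i, him⟩)
                  (le_ciSup (f := fun z' => F (Seq.mergeFn (i + 1)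
                    (Function.update x ⟨i, him⟩ (z ⟨i, him⟩)) z')) (bddR _) z)
    have c0 := claim m le_rfl (fun _ => Classical.arbitrary B)
    rw [Nat.sub_self] at c0
    simp only [Seq.inter_zero, Seq.app_nil, Seq.mergeFn_zero] at c0
    have hFz : ∀ z : Fin (m + 1) → B, |F z - Q h (D z)| ≤ lam * Δ := by
      intro z
      have hz : C (D z) = z := hCD z
      have e1 : F z = ∑ o' : O, ∑ r' : R, P h (D z) (o', r')
          * (ρ r' + lam * ⨆ x', Qb (Seq.g C rbot (Seq.ext h (D z) o' r')) x') := by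
        simp only [hFdef]
        rw [hQbOBE]
        refine Finset.sum_congr rfl fun o' _ => Finset.sum_congr rfl fun r' _ => ?_
        have hp : Pb (Seq.app (Seq.g C rbot h) (Seq.inter z (Seq.lastObs h) rbot m))
            (z (Fin.last m)) (o', r') = P h (D z) (o', r') := by
          conv_lhs => rw [← hz]
          exact hPbcomplete h (D z) o' r'
        have hx : Seq.ext (Seq.app (Seq.g C rbot h) (Seq.inter z (Seq.lastObs h) rbot m))
            (z (Fin.last m)) o' r' = Seq.g C rbot (Seq.ext h (D z) o' r') := by
          conv_lhs => rw [← hz]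
          exact (Seq.g_ext C rbot h (D z) o' r').symm
        rw [hp, hx]
      have hgl : γ = lam * lam ^ m := by rw [← hlamd]; ring
      have hsub : F z - Q h (D z)
          = ∑ o' : O, ∑ r' : R, P h (D z) (o', r')
              * (lam * diff (Seq.ext h (D z) o' r')) := by
        rw [e1, hQOBE h (D z), ← Finset.sum_sub_distrib]
        refine Finset.sum_congr rfl fun o' _ => ?_
        rw [← Finset.sum_sub_distrib]
        refine Finset.sum_congr rfl fun r' _ => ?_
        simp only [hdiffdef]
        rw [hgl]
        ring
      rw [hsub]
      have hP1' : (∑ o' : O, ∑ r' : R, P h (D z) (o', r')) = 1 := by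
        rw [← Fintype.sum_prod_type]
        exact hP1 h (D z)
      calc |∑ o' : O, ∑ r' : R, P h (D z) (o', r')
              * (lam * diff (Seq.ext h (D z) o' r'))|
          ≤ ∑ o' : O, |∑ r' : R, P h (D z) (o', r')
              * (lam * diff (Seq.ext h (D z) o' r'))| := Finset.abs_sum_le_sum_abs _ _
        _ ≤ ∑ o' : O, ∑ r' : R, |P h (D z) (o', r')
              * (lam * diff (Seq.ext h (D z) o' r'))| :=
            Finset.sum_le_sum fun o' _ => Finset.abs_sum_le_sum_abs _ _
        _ ≤ ∑ o' : O, ∑ r' : R, P h (D z) (o', r') * (lam * Δ) := by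
            refine Finset.sum_le_sum fun o' _ => Finset.sum_le_sum fun r' _ => ?_
            rw [abs_mul, abs_of_nonneg (hP0 _ _ _), abs_mul, abs_of_nonneg hlam0]
            exact mul_le_mul_of_nonneg_left
              (mul_le_mul_of_nonneg_left (hD _) hlam0) (hP0 _ _ _)
        _ = lam * Δ := by
            rw [show (∑ o' : O, ∑ r' : R, P h (D z) (o', r') * (lam * Δ))
                = (∑ o' : O, ∑ r' : R, P h (D z) (o', r')) * (lam * Δ) from by
              rw [Finset.sum_mul]
              exact Finset.sum_congr rfl fun o' _ => (Finset.sum_mul _ _ _).symm]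
            rw [hP1', one_mul]
    have e4 : (⨆ a, Q h a) = ⨆ z : Fin (m + 1) → B, Q h (D z) :=
      le_antisymm
        (ciSup_le fun a => le_ciSup_of_le (bddR _) (C a) (le_of_eq (by rw [hDC a])))
        (ciSup_le fun z => le_ciSup (bddR _) (D z))
    have hde : |diff h| = lam ^ m * |(⨆ z, F z) - ⨆ z : Fin (m + 1) → B, Q h (D z)| := by
      simp only [hdiffdef]
      rw [c0, e4, ← mul_sub, abs_mul, abs_of_nonneg hlm]
    rw [hde]
    calc lam ^ m * |(⨆ z, F z) - ⨆ z : Fin (m + 1) → B, Q h (D z)|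
        ≤ lam ^ m * (lam * Δ) :=
          mul_le_mul_of_nonneg_left (abs_ciSup_sub_ciSup _ _ _ hFz) hlm
      _ = γ * Δ := by rw [← mul_assoc, ← pow_succ, hlamd]
  have hcontr : Δ ≤ γ * Δ := by
    rw [hDdef]
    exact csSup_le ⟨|diff h0|, ⟨h0, rfl⟩⟩ (by rintro _ ⟨h, rfl⟩; exact key h)
  have hDneg : Δ ≤ 0 := by
    by_contra hpos
    push_neg at hpos
    have h1 : γ * Δ < 1 * Δ := mul_lt_mul_of_pos_right hγ1 hpos
    rw [one_mul] at h1
    linarith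
  have hzero : diff h0 = 0 := by
    have h1 : |diff h0| = 0 := le_antisymm (le_trans (hD h0) hDneg) (abs_nonneg _)
    exact abs_eq_zero.1 h1
  simp only [hdiffdef] at hzero
  exact sub_eq_zero.1 hzero
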